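/- For every graph E, the topology τ_{F_cf} generated by the cofinite filter on Path(E) is the coarsest inverse semigroup topology on G(E): every Hausdorff topology τ on G(E) making multiplication and inversion continuous satisfies τ_{F_cf} ⊆ τ. -/

import Mathlib

universe u

/-- A directed graph. -/
structure DiGraph : Type (u + 1) where
  V : Type u
  E : Type u
  s : E → V
  r : E → V

namespace DiGraph

variable (G : DiGraph.{u})

/-- A list of edges forms a valid path starting at vertex `v`. -/
def Valid (v : G.V) : List G.E → Prop
  | [] => True
  | e :: l => G.s e = v ∧ Valid (G.r e) l

/-- the endpoint of a list of edges starting at `v`. -/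
def dst (v : G.V) : List G.E → G.V
  | [] => v
  | e :: l => dst (G.r e) l

variable {G}

lemma dst_append (v : G.V) (l₁ l₂ : List G.E) :
    G.dst v (l₁ ++ l₂) = G.dst (G.dst v l₁) l₂ := by
  induction l₁ generalizing v with
  | nil => rfl
  | cons e t ih => simp [dst, ih]

lemma valid_append (v : G.V) (l₁ l₂ : List G.E) :
    G.Valid v (l₁ ++ l₂) ↔ G.Valid v l₁ ∧ G.Valid (G.dst v l₁) l₂ := by
  induction l₁ generalizing v with
  | nil => simp [Valid, dst]
  | cons e t ih => simp [Valid, dst, ih, and_assoc]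

variable (G) in
/-- A (finite, directed) path in `G`: a source vertex together with a
composable list of edges.  Paths of length zero are the vertices. -/
structure GPath : Type u where
  src : G.V
  edges : List G.E
  valid : G.Valid src edges

/-- The range (end vertex) of a path. -/
def GPath.rng (p : G.GPath) : G.V := G.dst p.src p.edges

/-- Concatenation of composable paths. -/
def GPath.comp (p q : G.GPath) (h : p.rng = q.src) : G.GPath :=
  ⟨p.src, p.edges ++ q.edges, by
    rw [valid_append]
    exact ⟨p.valid, by rw [show G.dst p.src p.edges = q.src from h]; exact q.valid⟩⟩

lemma GPath.comp_rng (p q : G.GPath) (h : p.rng = q.src) : (p.comp q h).rng = q.rng := by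
  show G.dst p.src (p.edges ++ q.edges) = _
  rw [dst_append, show G.dst p.src p.edges = q.src from h]; rfl

/-- If `p` is a prefix of the path `q`, the remaining path (so that
`q = p.comp (p.strip q _ _)`). -/
def GPath.strip (p q : G.GPath) (hs : p.src = q.src) (hp : p.edges <+: q.edges) : G.GPath :=
  ⟨p.rng, q.edges.drop p.edges.length, by
    obtain ⟨t, ht⟩ := hp
    have h1 : p.edges ++ q.edges.drop p.edges.length = q.edges := by
      rw [← ht, List.drop_left]
    have h2 : G.Valid p.src (p.edges ++ q.edges.drop p.edges.length) := by
      rw [h1, hs]; exact q.valid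
    exact ((valid_append _ _ _).mp h2).2⟩

lemma GPath.strip_rng (p q : G.GPath) (hs : p.src = q.src) (hp : p.edges <+: q.edges) :
    (p.strip q hs hp).rng = q.rng := by
  show G.dst p.rng (q.edges.drop p.edges.length) = G.dst q.src q.edges
  obtain ⟨t, ht⟩ := hp
  have h1 : p.edges ++ q.edges.drop p.edges.length = q.edges := by
    rw [← ht, List.drop_left]
  conv_rhs => rw [← hs, ← h1]
  rw [dst_append]; rfl

variable (G) in
/-- A nonzero element `a b⁻¹` of the graph inverse semigroup: a pair of
paths with the same range. -/
structure NZ : Type u where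
  a : G.GPath
  b : G.GPath
  h : a.rng = b.rng

/-- The graph inverse semigroup `G(E)` over a directed graph, in normal form:
the elements `a b⁻¹` with `r(a) = r(b)`, together with a zero element. -/
def GIS (G : DiGraph.{u}) : Type u := Option (NZ G)

instance : Zero (GIS G) := ⟨none⟩

open scoped Classical in
/-- The multiplication of the graph inverse semigroup:
`a b⁻¹ · c d⁻¹ = a c₁ d⁻¹` if `c = b c₁`, `a (d b₁)⁻¹` if `b = c b₁`, and `0` otherwise. -/
noncomputable instance : Mul (GIS G) :=
  ⟨fun x y =>
    match x, y with
    | none, _ => none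
    | some _, none => none
    | some ⟨a, b, hab⟩, some ⟨c, d, hcd⟩ =>
      if h : b.src = c.src ∧ b.edges <+: c.edges then
        some ⟨a.comp (b.strip c h.1 h.2) hab, d, by
          exact (GPath.comp_rng a (b.strip c h.1 h.2) hab).trans
            ((GPath.strip_rng b c h.1 h.2).trans hcd)⟩
      else if h' : c.src = b.src ∧ c.edges <+: b.edges then
        some ⟨a, d.comp (c.strip b h'.1 h'.2) hcd.symm, by
          exact hab.trans ((GPath.strip_rng c b h'.1 h'.2).symm.trans
            (GPath.comp_rng d (c.strip b h'.1 h'.2) hcd.symm).symm)⟩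
      else none⟩

/-- The nonzero element `a b⁻¹` of `G(E)` determined by a pair of paths
with the same range. -/
def GIS.nz (n : NZ G) : GIS G := some n

/-- The inversion of the graph inverse semigroup: `(u v⁻¹)⁻¹ = v u⁻¹`. -/
def GIS.inv : GIS G → GIS G
  | none => none
  | some ⟨a, b, h⟩ => some ⟨b, a, h.symm⟩

end DiGraph
namespace DiGraph

variable {G : DiGraph.{u}}

/-- membership predicate for the basic neighbourhoods of zero: all of
`a b⁻¹` with `a, b ∈ F`, together with `0`. -/
def inUF (F : Set G.GPath) : GIS G → Prop
  | none => True
  | some n => n.a ∈ F ∧ n.b ∈ F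

/-- The basic neighbourhood `U_F(0) = {a b⁻¹ : a, b ∈ F} ∪ {0}` of zero. -/
def UF (F : Set G.GPath) : Set (GIS G) := {x | inUF F x}

lemma inUF_mono {F₁ F₂ : Set G.GPath} (h : F₁ ⊆ F₂) :
    ∀ x : GIS G, inUF F₁ x → inUF F₂ x := by
  intro x hx
  cases x with
  | none => trivial
  | some n => exact ⟨h hx.1, h hx.2⟩

/-- The topology `τ_𝓕` on `G(E)` determined by a filter `𝓕` on `Path(E)`:
every nonzero element is isolated, and the sets `U_F(0)`, `F ∈ 𝓕`, form a
neighbourhood base at `0`. -/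
def tauF (𝓕 : Filter G.GPath) : TopologicalSpace (GIS G) where
  IsOpen U := (0 : GIS G) ∈ U → ∃ F ∈ 𝓕, UF F ⊆ U
  isOpen_univ := fun _ => ⟨Set.univ, Filter.univ_mem, Set.subset_univ _⟩
  isOpen_inter := fun U V hU hV h0 => by
    obtain ⟨F₁, hF₁, hs₁⟩ := hU h0.1
    obtain ⟨F₂, hF₂, hs₂⟩ := hV h0.2
    exact ⟨F₁ ∩ F₂, Filter.inter_mem hF₁ hF₂, fun x hx =>
      ⟨hs₁ (inUF_mono Set.inter_subset_left x hx),
       hs₂ (inUF_mono Set.inter_subset_right x hx)⟩⟩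
  isOpen_sUnion := fun S hS h0 => by
    obtain ⟨U, hU, h0U⟩ := h0
    obtain ⟨F, hF, hs⟩ := hS U hU h0U
    exact ⟨F, hF, hs.trans (Set.subset_sUnion_of_mem hU)⟩

/-- The prefix partial order on paths: `a ≤ b` iff `b` is a prefix of `a`. -/
def prefLE (a b : G.GPath) : Prop := b.src = a.src ∧ b.edges <+: a.edges

/-- An ideal of `(Path(E), ≤)`: a set `A` with `↓A = A`. -/
def IsIdeal (A : Set G.GPath) : Prop :=
  ∀ a b : G.GPath, prefLE a b → b ∈ A → a ∈ A

/-- A topological filter on `Path(E)`: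
(i) for `F ∈ 𝓕` and paths `a, b` with `r(a) = r(b)`, the set
`F \ {bk : k ∈ Path(E), ak ∉ F}` belongs to `𝓕`;
(ii) `𝓕` contains all cofinite subsets of `Path(E)`;
(iii) `𝓕` has a base consisting of ideals of `(Path(E), ≤)`. -/
def IsTopFilter (𝓕 : Filter G.GPath) : Prop :=
  (∀ F ∈ 𝓕, ∀ a b : G.GPath, a.rng = b.rng →
      F \ {p | ∃ (k : G.GPath) (h1 : b.rng = k.src) (h2 : a.rng = k.src),
        p = b.comp k h1 ∧ a.comp k h2 ∉ F} ∈ 𝓕) ∧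
  𝓕 ≤ Filter.cofinite ∧
  (∀ F ∈ 𝓕, ∃ I ∈ 𝓕, I ⊆ F ∧ IsIdeal I)

variable (G) in
/-- The filter `𝓕_ω` generated by the sets `U_n = {u ∈ Path(E) : |u| > n}`. -/
def Fomega : Filter G.GPath :=
  Filter.generate {S | ∃ n : ℕ, S = {u : G.GPath | n < u.edges.length}}

variable (G) in
/-- `U_n(0) = {u v⁻¹ : min{|u|,|v|} > n} ∪ {0}`. -/
def Un (n : ℕ) : Set (GIS G) := UF {u : G.GPath | n < u.edges.length}

end DiGraph

namespace DiGraph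

variable {G : DiGraph.{u}}

lemma GPath.ext' {p q : G.GPath} (h1 : p.src = q.src) (h2 : p.edges = q.edges) : p = q := by
  cases p; cases q; simp only at h1 h2; subst h1; subst h2; rfl

lemma NZ.ext' {m n : NZ G} (h1 : m.a = n.a) (h2 : m.b = n.b) : m = n := by
  cases m; cases n; simp only at h1 h2; subst h1; subst h2; rfl

/-- prefix relation: `Pre p q` iff `p` is a prefix of `q`. -/
abbrev Pre (p q : G.GPath) : Prop := p.src = q.src ∧ p.edges <+: q.edges

lemma Pre.refl (p : G.GPath) : Pre p p := ⟨rfl, List.prefix_refl _⟩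

/-- trivial path at a vertex -/
def trv (w : G.V) : G.GPath := ⟨w, [], trivial⟩

@[simp] lemma trv_rng (w : G.V) : (trv (G := G) w).rng = w := rfl

/-- the idempotent `c c⁻¹` -/
def idm (c : G.GPath) : GIS G := GIS.nz ⟨c, c, rfl⟩

/-- vertex idempotent -/
def ew (w : G.V) : GIS G := idm (trv w)

def pel (p : G.GPath) : GIS G := GIS.nz ⟨p, trv p.rng, rfl⟩

def pinv (p : G.GPath) : GIS G := GIS.nz ⟨trv p.rng, p, rfl⟩

lemma idm_ne_zero (c : G.GPath) : idm c ≠ 0 := fun h => by cases h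

lemma idm_inj {c d : G.GPath} (h : idm c = idm d) : c = d := by
  have := Option.some_injective _ h
  exact congrArg NZ.a this

open scoped Classical in
lemma mul_def (m n : NZ G) : GIS.nz m * GIS.nz n =
    (if h : Pre m.b n.a then
      GIS.nz ⟨m.a.comp (m.b.strip n.a h.1 h.2) m.h, n.b, by
        exact (GPath.comp_rng m.a (m.b.strip n.a h.1 h.2) m.h).trans ((GPath.strip_rng m.b n.a h.1 h.2).trans n.h)⟩
    else if h' : Pre n.a m.b then
      GIS.nz ⟨m.a, n.b.comp (n.a.strip m.b h'.1 h'.2) n.h.symm, by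
        exact m.h.trans ((GPath.strip_rng n.a m.b h'.1 h'.2).symm.trans (GPath.comp_rng n.b (n.a.strip m.b h'.1 h'.2) n.h.symm).symm)⟩
    else 0) := by
  cases m; cases n; rfl

@[simp] lemma zero_mul' (x : GIS G) : (0 : GIS G) * x = 0 := rfl

@[simp] lemma mul_zero' (x : GIS G) : x * (0 : GIS G) = 0 := by cases x <;> rfl

@[simp] lemma inv_zero' : (0 : GIS G).inv = 0 := rfl

@[simp] lemma inv_nz (m : NZ G) : (GIS.nz m).inv = GIS.nz ⟨m.b, m.a, m.h.symm⟩ := by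
  cases m; rfl

lemma comp_strip_eq (p q : G.GPath) (hs : p.src = q.src) (hp : p.edges <+: q.edges) :
    p.comp (p.strip q hs hp) rfl = q := by
  refine GPath.ext' hs ?_
  show p.edges ++ q.edges.drop p.edges.length = q.edges
  obtain ⟨t, ht⟩ := hp
  rw [← ht, List.drop_left]

lemma comp_strip_eq' (p q : G.GPath) (hs : p.src = q.src) (hp : p.edges <+: q.edges)
    (h : p.rng = (p.strip q hs hp).src) :
    p.comp (p.strip q hs hp) h = q := comp_strip_eq p q hs hp

lemma mul_of_pre (m n : NZ G) (h : Pre m.b n.a) :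
    GIS.nz m * GIS.nz n = GIS.nz ⟨m.a.comp (m.b.strip n.a h.1 h.2) m.h, n.b, by
        exact (GPath.comp_rng m.a (m.b.strip n.a h.1 h.2) m.h).trans ((GPath.strip_rng m.b n.a h.1 h.2).trans n.h)⟩ := by
  rw [mul_def, dif_pos h]

lemma mul_of_pre' (m n : NZ G) (h : ¬ Pre m.b n.a) (h' : Pre n.a m.b) :
    GIS.nz m * GIS.nz n = GIS.nz ⟨m.a, n.b.comp (n.a.strip m.b h'.1 h'.2) n.h.symm, by
        exact m.h.trans ((GPath.strip_rng n.a m.b h'.1 h'.2).symm.trans (GPath.comp_rng n.b (n.a.strip m.b h'.1 h'.2) n.h.symm).symm)⟩ := by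
  rw [mul_def, dif_neg h, dif_pos h']

lemma mul_of_npre (m n : NZ G) (h : ¬ Pre m.b n.a) (h' : ¬ Pre n.a m.b) :
    GIS.nz m * GIS.nz n = 0 := by
  rw [mul_def, dif_neg h, dif_neg h']

lemma mul_ne_zero_pre (m n : NZ G) (h : GIS.nz m * GIS.nz n ≠ 0) :
    Pre m.b n.a ∨ Pre n.a m.b := by
  by_contra hc
  push_neg at hc
  exact h (mul_of_npre m n hc.1 hc.2)

lemma comp_strip_self (p : G.GPath) (h : p.rng = (p.strip p rfl (List.prefix_refl _)).src)
    (q : G.GPath) (hq : q.rng = p.rng) :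
    q.comp (p.strip p rfl (List.prefix_refl _)) (by rw [hq]; exact h) = q := by
  refine GPath.ext' rfl ?_
  show q.edges ++ p.edges.drop p.edges.length = q.edges
  rw [List.drop_length, List.append_nil]

lemma mul_self_inv (m : NZ G) : GIS.nz m * (GIS.nz m).inv = idm m.a := by
  rw [inv_nz, mul_of_pre m _ (Pre.refl m.b)]
  unfold idm GIS.nz
  congr 1
  refine NZ.ext' ?_ rfl
  refine GPath.ext' rfl ?_
  show m.a.edges ++ m.b.edges.drop m.b.edges.length = m.a.edges
  rw [List.drop_length, List.append_nil]

lemma inv_mul_self (m : NZ G) : (GIS.nz m).inv * GIS.nz m = idm m.b := by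
  rw [inv_nz, mul_of_pre _ m (Pre.refl m.a)]
  unfold idm GIS.nz
  congr 1
  refine NZ.ext' ?_ rfl
  refine GPath.ext' rfl ?_
  show m.b.edges ++ m.a.edges.drop m.a.edges.length = m.b.edges
  rw [List.drop_length, List.append_nil]

end DiGraph

namespace DiGraph

variable {G : DiGraph.{u}}

lemma pre_antisymm {p q : G.GPath} (h : Pre p q) (h' : Pre q p) : p = q :=
  GPath.ext' h.1 (h.2.eq_of_length (le_antisymm h.2.length_le h'.2.length_le))

lemma ew_ne_zero (w : G.V) : ew w ≠ 0 := idm_ne_zero _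

lemma nz_ne_zero (m : NZ G) : GIS.nz m ≠ 0 := fun h => by cases h

/-- the composite map `c ↦ p⁻¹ (c c⁻¹) p` -/
noncomputable def rho (p c : G.GPath) : GIS G := pinv p * idm c * pel p

lemma pinv_mul_pel (p : G.GPath) : pinv p * pel p = ew p.rng := by
  rw [pinv, pel, mul_of_pre _ _ (Pre.refl p)]
  unfold ew idm GIS.nz
  congr 1
  refine NZ.ext' (GPath.ext' rfl ?_) rfl
  show [] ++ p.edges.drop p.edges.length = []
  rw [List.drop_length]; rfl

lemma pinv_mul_idm_of_pre {p c : G.GPath} (h : Pre c p) : pinv p * idm c = pinv p := by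
  by_cases hpc : Pre p c
  · obtain rfl : p = c := pre_antisymm hpc h
    rw [pinv, idm, mul_of_pre _ _ (show Pre p p from Pre.refl p)]
    unfold GIS.nz
    congr 1
    refine NZ.ext' (GPath.ext' rfl ?_) rfl
    show [] ++ p.edges.drop p.edges.length = []
    rw [List.drop_length]; rfl
  · rw [pinv, idm, mul_of_pre' _ _ hpc h]
    unfold GIS.nz
    congr 1
    exact NZ.ext' rfl (comp_strip_eq' c p h.1 h.2 rfl)

lemma rho_eq_of_pre {p c : G.GPath} (h : Pre c p) : rho p c = ew p.rng := by
  rw [rho, pinv_mul_idm_of_pre h, pinv_mul_pel]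

lemma rho_ne_of_npre {p c : G.GPath} (h : ¬ Pre c p) : rho p c ≠ ew p.rng := by
  rw [rho]
  by_cases hpc : Pre p c
  · rw [pinv, idm, mul_of_pre _ _ hpc, pel,
      mul_of_pre' _ _ (by exact h) (by exact hpc)]
    intro hc
    unfold ew idm GIS.nz at hc
    have h2 := congrArg (fun z => ((Option.getD z ⟨trv p.rng, trv p.rng, rfl⟩ : NZ G)).b.edges) hc
    simp only [Option.getD_some] at h2
    have h3 : ([] : List G.E) ++ c.edges.drop p.edges.length = [] := h2
    rw [List.nil_append, List.drop_eq_nil_iff] at h3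
    have h5 : p.edges = c.edges := hpc.2.eq_of_length (le_antisymm hpc.2.length_le h3)
    exact h ⟨hpc.1.symm, by rw [h5]⟩
  · rw [pinv, idm, mul_of_npre _ _ (by exact hpc) (by exact h), zero_mul']
    exact fun hc => (ew_ne_zero p.rng) hc.symm

lemma idm_mul_of_pre {c d : G.GPath} (h : Pre c d) : idm c * idm d = idm d := by
  rw [idm, idm, mul_of_pre _ _ h]
  unfold GIS.nz
  congr 1
  exact NZ.ext' (comp_strip_eq' c d h.1 h.2 rfl) rfl

lemma idm_mul_of_pre' {c d : G.GPath} (h : ¬ Pre c d) (h' : Pre d c) :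
    idm c * idm d = idm c := by
  rw [idm, idm, mul_of_pre' _ _ h h']
  unfold GIS.nz
  congr 1
  exact NZ.ext' rfl (comp_strip_eq' d c h'.1 h'.2 rfl)

lemma idm_mul_ew {c : G.GPath} {w : G.V} (h : c.src = w) : idm c * ew w = idm c := by
  by_cases hc : c.edges = []
  · have : c = trv w := GPath.ext' h hc
    rw [this, ew, idm_mul_of_pre (Pre.refl _)]
  · refine idm_mul_of_pre' ?_ ?_
    · intro hp
      exact hc (List.prefix_nil.mp hp.2)
    · exact ⟨h.symm, List.nil_prefix⟩

lemma ew_mul_src {w : G.V} {m : NZ G} (h : ew w * GIS.nz m ≠ 0) : m.a.src = w := by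
  rcases mul_ne_zero_pre _ _ h with h' | h'
  · exact h'.1.symm
  · exact h'.1

lemma idm_eq_ew_iff {c : G.GPath} {w : G.V} : idm c = ew w ↔ c = trv w :=
  ⟨fun h => idm_inj h, fun h => by rw [h, ew]⟩

lemma finite_pre_pairs (a b : G.GPath) :
    {x : GIS G | ∃ m : NZ G, x = GIS.nz m ∧ Pre m.a a ∧ Pre m.b b}.Finite := by
  have hsub : {x : GIS G | ∃ m : NZ G, x = GIS.nz m ∧ Pre m.a a ∧ Pre m.b b} ⊆
      ⋃ l₁ ∈ {l | l ∈ a.edges.inits}, ⋃ l₂ ∈ {l | l ∈ b.edges.inits},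
        {x : GIS G | ∃ m : NZ G, x = GIS.nz m ∧ m.a.src = a.src ∧ m.a.edges = l₁ ∧
          m.b.src = b.src ∧ m.b.edges = l₂} := by
    rintro x ⟨m, rfl, h1, h2⟩
    refine Set.mem_biUnion ((List.mem_inits _ _).mpr h1.2) ?_
    refine Set.mem_biUnion ((List.mem_inits _ _).mpr h2.2) ?_
    exact ⟨m, rfl, h1.1, rfl, h2.1, rfl⟩
  refine Set.Finite.subset ?_ hsub
  refine Set.Finite.biUnion (a.edges.inits.finite_toSet) fun l₁ _ => ?_
  refine Set.Finite.biUnion (b.edges.inits.finite_toSet) fun l₂ _ => ?_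
  refine Set.Subsingleton.finite ?_
  rintro x ⟨m, rfl, ha1, ha2, hb1, hb2⟩ y ⟨m', rfl, ha1', ha2', hb1', hb2'⟩
  have : m = m' := NZ.ext' (GPath.ext' (ha1.trans ha1'.symm) (ha2.trans ha2'.symm))
    (GPath.ext' (hb1.trans hb1'.symm) (hb2.trans hb2'.symm))
  rw [this]

lemma finite_pre_idm (c₀ : G.GPath) (w : G.V) :
    {z : GIS G | ∃ c : G.GPath, z = idm c ∧ c.src = w ∧ c.edges <+: c₀.edges}.Finite := by
  have hsub : {z : GIS G | ∃ c : G.GPath, z = idm c ∧ c.src = w ∧ c.edges <+: c₀.edges} ⊆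
      ⋃ l ∈ {l | l ∈ c₀.edges.inits},
        {z : GIS G | ∃ c : G.GPath, z = idm c ∧ c.src = w ∧ c.edges = l} := by
    rintro z ⟨c, rfl, h1, h2⟩
    exact Set.mem_biUnion ((List.mem_inits _ _).mpr h2) ⟨c, rfl, h1, rfl⟩
  refine Set.Finite.subset ?_ hsub
  refine Set.Finite.biUnion (c₀.edges.inits.finite_toSet) fun l _ => ?_
  refine Set.Subsingleton.finite ?_
  rintro z ⟨c, rfl, h1, h2⟩ y ⟨c', rfl, h1', h2'⟩
  rw [show c = c' from GPath.ext' (h1.trans h1'.symm) (h2.trans h2'.symm)]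

end DiGraph

namespace DiGraph

variable {G : DiGraph.{u}}

section Topo

variable [TopologicalSpace (GIS G)]

/-- `x ↦ p⁻¹ (x x⁻¹) p` -/
noncomputable def sigL (p : G.GPath) (x : GIS G) : GIS G :=
  pinv p * (x * GIS.inv x) * pel p

/-- `x ↦ p⁻¹ (x⁻¹ x) p` -/
noncomputable def sigR (p : G.GPath) (x : GIS G) : GIS G :=
  pinv p * (GIS.inv x * x) * pel p

lemma sigL_zero (p : G.GPath) : sigL p (0 : GIS G) = 0 := by
  show pinv p * ((0 : GIS G) * GIS.inv 0) * pel p = 0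
  rw [inv_zero', mul_zero', mul_zero', zero_mul']

lemma sigR_zero (p : G.GPath) : sigR p (0 : GIS G) = 0 := by
  show pinv p * (GIS.inv (0 : GIS G) * 0) * pel p = 0
  rw [inv_zero', mul_zero', mul_zero', zero_mul']

lemma sigL_nz (p : G.GPath) (m : NZ G) : sigL p (GIS.nz m) = rho p m.a := by
  show pinv p * (GIS.nz m * GIS.inv (GIS.nz m)) * pel p = _
  rw [mul_self_inv]; rfl

lemma sigR_nz (p : G.GPath) (m : NZ G) : sigR p (GIS.nz m) = rho p m.b := by
  show pinv p * (GIS.inv (GIS.nz m) * GIS.nz m) * pel p = _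
  rw [inv_mul_self]; rfl

lemma cont_mul_left (hmul : Continuous fun q : GIS G × GIS G => q.1 * q.2) (c : GIS G) : Continuous fun x : GIS G => c * x :=
  hmul.comp (continuous_const.prodMk continuous_id)

lemma cont_mul_right (hmul : Continuous fun q : GIS G × GIS G => q.1 * q.2) (c : GIS G) : Continuous fun x : GIS G => x * c :=
  hmul.comp (continuous_id.prodMk continuous_const)

lemma cont_sigL (hmul : Continuous fun q : GIS G × GIS G => q.1 * q.2) (hinv : Continuous (GIS.inv : GIS G → GIS G)) (p : G.GPath) : Continuous (sigL (G := G) p) := by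
  have h1 : Continuous fun x : GIS G => x * GIS.inv x :=
    hmul.comp (continuous_id.prodMk hinv)
  have h2 : Continuous fun x : GIS G => pinv p * (x * GIS.inv x) :=
    hmul.comp (continuous_const.prodMk h1)
  exact hmul.comp (h2.prodMk continuous_const)

lemma cont_sigR (hmul : Continuous fun q : GIS G × GIS G => q.1 * q.2) (hinv : Continuous (GIS.inv : GIS G → GIS G)) (p : G.GPath) : Continuous (sigR (G := G) p) := by
  have h1 : Continuous fun x : GIS G => GIS.inv x * x :=
    hmul.comp (hinv.prodMk continuous_id)
  have h2 : Continuous fun x : GIS G => pinv p * (GIS.inv x * x) :=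
    hmul.comp (continuous_const.prodMk h1)
  exact hmul.comp (h2.prodMk continuous_const)

variable [T2Space (GIS G)]

lemma iso_core (hmul : Continuous fun q : GIS G × GIS G => q.1 * q.2) (w : G.V) (L : Filter (GIS G)) (hLb : L.NeBot)
    (hL : L ≤ nhds (ew w)) (j : GIS G → GIS G) (hjc : Continuous j)
    (hje : j (ew w) = ew w)
    (hj : {y | ∃ c : G.GPath, c ≠ trv w ∧ j y = idm c} ∈ L) : False := by
  haveI := hLb
  have hee : ew (G := G) w * ew w = ew w := idm_mul_ew rfl
  set M := Filter.map j L with hM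
  haveI : M.NeBot := Filter.map_neBot
  have hMle : M ≤ nhds (ew w) := by
    have t := hjc.tendsto (ew w)
    rw [hje] at t
    exact t.mono_left hL
  have hI : {z : GIS G | ∃ c : G.GPath, c ≠ trv w ∧ z = idm c} ∈ M := by
    rw [hM, Filter.mem_map]
    filter_upwards [hj] with y hy
    obtain ⟨c, h1, h2⟩ := hy
    exact ⟨c, h1, h2⟩
  have hcontl : Continuous fun z : GIS G => ew (G := G) w * z := cont_mul_left hmul _
  have hU' : IsOpen ((fun z : GIS G => ew w * z) ⁻¹' {(0 : GIS G)}ᶜ) :=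
    isOpen_compl_singleton.preimage hcontl
  have he0 : ew (G := G) w ∈ (fun z : GIS G => ew w * z) ⁻¹' {(0 : GIS G)}ᶜ := by
    simp only [Set.mem_preimage, Set.mem_compl_iff, Set.mem_singleton_iff, hee]
    exact ew_ne_zero w
  have hsrc : ((fun z : GIS G => ew w * z) ⁻¹' {(0 : GIS G)}ᶜ) ∈ M :=
    hMle (hU'.mem_nhds he0)
  have hprod : IsOpen ((fun q : GIS G × GIS G => q.1 * q.2) ⁻¹' {(0 : GIS G)}ᶜ) :=
    isOpen_compl_singleton.preimage hmul
  have heprod : (ew (G := G) w, ew (G := G) w) ∈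
      (fun q : GIS G × GIS G => q.1 * q.2) ⁻¹' {(0 : GIS G)}ᶜ := by
    simp only [Set.mem_preimage, Set.mem_compl_iff, Set.mem_singleton_iff, hee]
    exact ew_ne_zero w
  obtain ⟨u, v, hu, hv, heu, hev, huv⟩ := isOpen_prod_iff.mp hprod _ _ heprod
  set W := u ∩ v with hWdef
  have hW : W ∈ nhds (ew (G := G) w) := (hu.inter hv).mem_nhds ⟨heu, hev⟩
  have hWmul : ∀ z₁ ∈ W, ∀ z₂ ∈ W, z₁ * z₂ ≠ (0 : GIS G) := by
    intro z₁ h1 z₂ h2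
    exact huv (Set.mk_mem_prod h1.1 h2.2)
  set C := W ∩ ({z : GIS G | ∃ c : G.GPath, c ≠ trv w ∧ z = idm c} ∩
      ((fun z : GIS G => ew w * z) ⁻¹' {(0 : GIS G)}ᶜ)) with hCdef
  have hCM : C ∈ M := Filter.inter_mem (hMle hW) (Filter.inter_mem hI hsrc)
  obtain ⟨z₀, hz₀⟩ := Filter.nonempty_of_mem hCM
  obtain ⟨hz₀W, ⟨c₀, hc₀ne, rfl⟩, hz₀0⟩ := hz₀
  have hc₀src : c₀.src = w := by
    have h' : ew w * GIS.nz ⟨c₀, c₀, rfl⟩ ≠ 0 := hz₀0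
    exact ew_mul_src h'
  set K := {z : GIS G | ∃ c : G.GPath, z = idm c ∧ c.src = w ∧ c.edges <+: c₀.edges}
    with hKdef
  have hKfin := finite_pre_idm c₀ w
  have hCK : ∀ z ∈ C, z ∉ K → idm c₀ * z = z := by
    rintro z ⟨hzW, ⟨c, hcne, rfl⟩, hz0⟩ hzK
    have hne : idm c₀ * idm c ≠ 0 := hWmul _ hz₀W _ hzW
    rcases mul_ne_zero_pre _ _ hne with h | h
    · exact idm_mul_of_pre h
    · have hcsrc : c.src = w := ew_mul_src (show ew w * GIS.nz ⟨c, c, rfl⟩ ≠ 0 from hz0)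
      exact absurd ⟨c, rfl, hcsrc, h.2⟩ hzK
  by_cases hK : (M ⊓ Filter.principal Kᶜ).NeBot
  · haveI := hK
    set M₂ := M ⊓ Filter.principal Kᶜ with hM₂
    have hM₂M : M₂ ≤ M := inf_le_left
    have hgC : Filter.Tendsto (fun z : GIS G => idm c₀ * z) M₂ (nhds (idm c₀)) := by
      have t := (cont_mul_left hmul (idm c₀)).tendsto (ew (G := G) w)
      rw [show idm c₀ * ew w = idm c₀ from idm_mul_ew hc₀src] at t
      exact t.mono_left (hM₂M.trans hMle)
    have heq : (fun z : GIS G => idm c₀ * z) =ᶠ[M₂] id := by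
      filter_upwards [hM₂M hCM,
        Filter.mem_inf_of_right (Filter.mem_principal_self (Kᶜ : Set (GIS G)))] with z hz hzK
      exact hCK z hz hzK
    have hM₂z₀ : M₂ ≤ nhds (idm c₀) := by
      have : Filter.map (fun z : GIS G => idm c₀ * z) M₂ = M₂ := by
        rw [Filter.map_congr heq, Filter.map_id]
      rw [← this]
      exact hgC
    have hnb : (nhds (idm c₀) ⊓ nhds (ew (G := G) w)).NeBot :=
      Filter.neBot_of_le (le_inf hM₂z₀ (hM₂M.trans hMle))
    have := t2_iff_nhds.mp inferInstance hnb
    exact hc₀ne (idm_eq_ew_iff.mp this)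
  · rw [Filter.not_neBot] at hK
    have hKM : K ∈ M := by
      have := Filter.inf_principal_eq_bot.mp hK
      simpa using this
    have hCKfin : (C ∩ K).Finite := hKfin.subset Set.inter_subset_right
    have heCK : ew (G := G) w ∉ C ∩ K := by
      rintro ⟨⟨-, ⟨c, hcne, hec⟩, -⟩, -⟩
      exact hcne (idm_eq_ew_iff.mp hec.symm)
    have hcc : (C ∩ K)ᶜ ∈ M := hMle (hCKfin.isClosed.isOpen_compl.mem_nhds heCK)
    have hem : (∅ : Set (GIS G)) ∈ M := by
      have h2 := Filter.inter_mem (Filter.inter_mem hCM hKM) hcc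
      simpa [Set.inter_compl_self] using h2
    exact Filter.empty_notMem M hem

lemma isolated_ew (hmul : Continuous fun q : GIS G × GIS G => q.1 * q.2) (hinv : Continuous (GIS.inv : GIS G → GIS G)) (w : G.V) : IsOpen {ew (G := G) w} := by
  by_contra hop
  have hecl : ew (G := G) w ∈ closure {ew (G := G) w}ᶜ := by
    by_contra h'
    rw [mem_closure_iff] at h'
    push_neg at h'
    obtain ⟨o, ho, heo, hoe⟩ := h'
    have : o = {ew (G := G) w} := by
      apply Set.eq_singleton_iff_unique_mem.mpr
      refine ⟨heo, fun x hx => ?_⟩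
      by_contra hxe
      exact (Set.eq_empty_iff_forall_notMem.mp hoe) x ⟨hx, hxe⟩
    exact hop (this ▸ ho)
  have hL : (nhdsWithin (ew (G := G) w) {ew (G := G) w}ᶜ).NeBot :=
    mem_closure_iff_nhdsWithin_neBot.mp hecl
  set L := nhdsWithin (ew (G := G) w) {ew (G := G) w}ᶜ with hLdef
  have hLle : L ≤ nhds (ew (G := G) w) := nhdsWithin_le_nhds
  have hce : {ew (G := G) w}ᶜ ∈ L := self_mem_nhdsWithin
  have h0 : {(0 : GIS G)}ᶜ ∈ L := hLle (isOpen_compl_singleton.mem_nhds (ew_ne_zero w))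
  set A := {y : GIS G | ∃ m : NZ G, y = GIS.nz m ∧ m.a ≠ trv w} with hAdef
  set B := {y : GIS G | ∃ m : NZ G, y = GIS.nz m ∧ m.b ≠ trv w} with hBdef
  have hABsub : {(0 : GIS G)}ᶜ ∩ {ew (G := G) w}ᶜ ⊆ A ∪ B := by
    rintro y ⟨hy0, hye⟩
    cases y with
    | none => exact absurd rfl hy0
    | some m =>
      by_cases ha : m.a = trv w
      · by_cases hb : m.b = trv w
        · exact absurd (congrArg GIS.nz (NZ.ext' ha hb) : GIS.nz m = ew w) hye
        · exact Or.inr ⟨m, rfl, hb⟩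
      · exact Or.inl ⟨m, rfl, ha⟩
  have hAB : A ∪ B ∈ L := Filter.mem_of_superset (Filter.inter_mem h0 hce) hABsub
  have hjAe : (fun y : GIS G => y * GIS.inv y) (ew w) = ew w :=
    mul_self_inv ⟨trv w, trv w, rfl⟩
  have hjBe : (fun y : GIS G => GIS.inv y * y) (ew w) = ew w :=
    inv_mul_self ⟨trv w, trv w, rfl⟩
  have hjAc : Continuous fun y : GIS G => y * GIS.inv y :=
    hmul.comp (continuous_id.prodMk hinv)
  have hjBc : Continuous fun y : GIS G => GIS.inv y * y :=
    hmul.comp (hinv.prodMk continuous_id)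
  by_cases hA : (L ⊓ Filter.principal A).NeBot
  · refine iso_core hmul w (L ⊓ Filter.principal A) hA (inf_le_left.trans hLle)
      _ hjAc hjAe ?_
    filter_upwards [Filter.mem_inf_of_right (Filter.mem_principal_self A)] with y hy
    obtain ⟨m, rfl, hm⟩ := hy
    exact ⟨m.a, hm, mul_self_inv m⟩
  · rw [Filter.not_neBot] at hA
    have hAc : Aᶜ ∈ L := Filter.inf_principal_eq_bot.mp hA
    have hB : B ∈ L := by
      filter_upwards [hAB, hAc] with y hy hyA
      rcases hy with h | h
      · exact absurd h hyA
      · exact h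
    refine iso_core hmul w L hL hLle _ hjBc hjBe ?_
    filter_upwards [hB] with y hy
    obtain ⟨m, rfl, hm⟩ := hy
    exact ⟨m.b, hm, inv_mul_self m⟩

end Topo

end DiGraph

namespace DiGraph

variable {G : DiGraph.{u}}

section Topo2

variable [TopologicalSpace (GIS G)] [T2Space (GIS G)]

lemma isolated_nz (hmul : Continuous fun q : GIS G × GIS G => q.1 * q.2)
    (hinv : Continuous (GIS.inv : GIS G → GIS G)) (n : NZ G) :
    IsOpen {GIS.nz n} := by
  set P := sigL n.a ⁻¹' {ew n.a.rng} ∩ sigR n.b ⁻¹' {ew n.b.rng} with hPdef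
  have hPo : IsOpen P :=
    ((isolated_ew hmul hinv n.a.rng).preimage (cont_sigL hmul hinv n.a)).inter
      ((isolated_ew hmul hinv n.b.rng).preimage (cont_sigR hmul hinv n.b))
  have hmem : GIS.nz n ∈ P := by
    constructor
    · refine Set.mem_preimage.mpr ?_
      rw [sigL_nz, rho_eq_of_pre (Pre.refl n.a)]
      rfl
    · refine Set.mem_preimage.mpr ?_
      rw [sigR_nz, rho_eq_of_pre (Pre.refl n.b)]
      rfl
  have hPfin : P.Finite := by
    refine (finite_pre_pairs n.a n.b).subset ?_
    rintro x ⟨h1, h2⟩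
    cases x with
    | none =>
      exfalso
      have : sigL n.a (0 : GIS G) = ew n.a.rng := h1
      rw [sigL_zero] at this
      exact ew_ne_zero n.a.rng this.symm
    | some m =>
      have h1' : sigL n.a (GIS.nz m) = ew n.a.rng := h1
      have h2' : sigR n.b (GIS.nz m) = ew n.b.rng := h2
      rw [sigL_nz] at h1'
      rw [sigR_nz] at h2'
      refine ⟨m, rfl, ?_, ?_⟩
      · by_contra hc; exact rho_ne_of_npre hc h1'
      · by_contra hc; exact rho_ne_of_npre hc h2'
  have hset : {GIS.nz n} = P ∩ (P \ {GIS.nz n})ᶜ := by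
    ext x
    constructor
    · rintro rfl
      exact ⟨hmem, fun h => h.2 rfl⟩
    · rintro ⟨hP, hc⟩
      by_contra hx
      exact hc ⟨hP, hx⟩
  rw [hset]
  exact hPo.inter (hPfin.subset Set.diff_subset).isClosed.isOpen_compl

lemma zero_nbhd (hmul : Continuous fun q : GIS G × GIS G => q.1 * q.2)
    (hinv : Continuous (GIS.inv : GIS G → GIS G)) {F : Set G.GPath}
    (hF : F ∈ (Filter.cofinite : Filter G.GPath)) : UF F ∈ nhds (0 : GIS G) := by
  have hD : (Fᶜ : Set G.GPath).Finite := Filter.mem_cofinite.mp hF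
  set V := ⋂ p ∈ (Fᶜ : Set G.GPath),
    (sigL p ⁻¹' {ew p.rng}ᶜ ∩ sigR p ⁻¹' {ew p.rng}ᶜ) with hVdef
  have hVo : IsOpen V :=
    hD.isOpen_biInter fun p _ =>
      ((isOpen_compl_singleton).preimage (cont_sigL hmul hinv p)).inter
        ((isOpen_compl_singleton).preimage (cont_sigR hmul hinv p))
  have h0V : (0 : GIS G) ∈ V := by
    refine Set.mem_iInter₂.mpr fun p _ => ⟨?_, ?_⟩
    · refine Set.mem_preimage.mpr ?_
      rw [sigL_zero]
      exact fun h => ew_ne_zero p.rng (Set.mem_singleton_iff.mp h).symm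
    · refine Set.mem_preimage.mpr ?_
      rw [sigR_zero]
      exact fun h => ew_ne_zero p.rng (Set.mem_singleton_iff.mp h).symm
  have hVU : V ⊆ UF F := by
    intro x hx
    cases x with
    | none => exact trivial
    | some m =>
      have hx' := Set.mem_iInter₂.mp hx
      constructor
      · by_contra hma
        have h := (hx' m.a hma).1
        apply h
        refine Set.mem_preimage.mpr ?_
        show sigL m.a (GIS.nz m) = ew m.a.rng
        rw [sigL_nz, rho_eq_of_pre (Pre.refl m.a)]
      · by_contra hmb
        have h := (hx' m.b hmb).2
        apply h
        refine Set.mem_preimage.mpr ?_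
        show sigR m.b (GIS.nz m) = ew m.b.rng
        rw [sigR_nz, rho_eq_of_pre (Pre.refl m.b)]
  exact Filter.mem_of_superset (hVo.mem_nhds h0V) hVU

end Topo2

end DiGraph


open DiGraph in
/-- For every graph `E`, the topology `τ_{𝓕_cf}` generated by the cofinite
filter on `Path(E)` is the coarsest inverse semigroup topology on `G(E)`:
every Hausdorff topology `τ` on `G(E)` making multiplication and inversion
continuous satisfies `τ_{𝓕_cf} ⊆ τ` (i.e. `τ` is finer). -/
theorem tau_cofinite_coarsest (G : DiGraph.{u}) (τ : TopologicalSpace (GIS G))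
    (hT2 : @T2Space (GIS G) τ)
    (hmul : @Continuous (GIS G × GIS G) (GIS G)
      (@instTopologicalSpaceProd _ _ τ τ) τ (fun p => p.1 * p.2))
    (hinv : @Continuous (GIS G) (GIS G) τ τ GIS.inv) :
    τ ≤ tauF (Filter.cofinite : Filter G.GPath) := by
  letI := τ
  haveI := hT2
  rw [TopologicalSpace.le_def]
  intro U hU
  rw [isOpen_iff_mem_nhds]
  intro x hx
  cases x with
  | none =>
    obtain ⟨F, hF, hsub⟩ := hU hx
    exact Filter.mem_of_superset (zero_nbhd hmul hinv hF) hsub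
  | some m =>
    exact Filter.mem_of_superset ((isolated_nz hmul hinv m).mem_nhds rfl)
      (Set.singleton_subset_iff.mpr hx)
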